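/- Let G be a finite 2-group. Then the central quotient G/Z(G) is a dihedral 2-group (i.e., generated by two elements of order 2, including the Klein four group) if and only if |G : γ(G)Z(G)| = 4. -/

import Mathlib

open Subgroup
open scoped commutatorElement

universe u

section Helpers
variable {Q : Type u} [Group Q]

lemma conj_mem_of_index_two' {C : Subgroup Q} (hC : C.index = 2) {x : Q} (hx : x ∈ C)
    (g : Q) : g * x * g⁻¹ ∈ C := by
  rw [mul_assoc, Subgroup.mul_mem_iff_of_index_two hC, Subgroup.mul_mem_iff_of_index_two hC]
  simp [hx, Subgroup.inv_mem_iff]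

lemma mem_or_mul_mem_of_index_two' {C : Subgroup Q} (hC : C.index = 2) {t : Q} (ht : t ∉ C)
    (g : Q) : g ∈ C ∨ ∃ y ∈ C, g = y * t := by
  by_cases hg : g ∈ C
  · exact Or.inl hg
  · refine Or.inr ⟨g * t⁻¹, ?_, by group⟩
    rw [Subgroup.mul_mem_iff_of_index_two hC]
    simp [hg, ht, Subgroup.inv_mem_iff]

lemma comm_elt_mem_of_index_two' {C : Subgroup Q} (hC : C.index = 2) {x : Q} (hx : x ∈ C)
    (t : Q) : ⁅x, t⁆ ∈ C := by
  have h1 : t * x⁻¹ * t⁻¹ ∈ C := conj_mem_of_index_two' hC (C.inv_mem hx) t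
  have he : ⁅x, t⁆ = x * (t * x⁻¹ * t⁻¹) := by rw [commutatorElement_def]; group
  rw [he]; exact C.mul_mem hx h1

lemma commutator_eq_closure_comm {C : Subgroup Q} (hC : C.index = 2)
    (hcomm : ∀ x ∈ C, ∀ y ∈ C, x * y = y * x) {t : Q} (ht : t ∉ C) :
    commutator Q = Subgroup.closure ((fun x => ⁅x, t⁆) '' (C : Set Q)) := by
  set R := Subgroup.closure ((fun x => ⁅x, t⁆) '' (C : Set Q)) with hR
  have hgen : ∀ x ∈ C, ⁅x, t⁆ ∈ R := fun x hx => Subgroup.subset_closure ⟨x, hx, rfl⟩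
  apply le_antisymm
  · rw [commutator_def, Subgroup.commutator_le]
    have key : ∀ y₁ ∈ C, ∀ y₂ ∈ C, ⁅y₁, y₂ * t⁆ ∈ R := by
      intro y₁ hy₁ y₂ hy₂
      have h2 : ⁅y₁, t⁆ ∈ C := comm_elt_mem_of_index_two' hC hy₁ t
      have e1 : ⁅y₁, y₂ * t⁆ = y₂ * ⁅y₁, t⁆ * y₂⁻¹ := by
        calc ⁅y₁, y₂ * t⁆ = y₁ * y₂ * (t * y₁⁻¹ * t⁻¹) * y₂⁻¹ := by
              simp only [commutatorElement_def]; group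
          _ = y₂ * y₁ * (t * y₁⁻¹ * t⁻¹) * y₂⁻¹ := by rw [hcomm _ hy₁ _ hy₂]
          _ = y₂ * ⁅y₁, t⁆ * y₂⁻¹ := by simp only [commutatorElement_def]; group
      rw [e1, hcomm _ hy₂ _ h2, mul_inv_cancel_right]
      exact hgen _ hy₁
    intro g _ h _
    rcases mem_or_mul_mem_of_index_two' hC ht g with hg | ⟨y₁, hy₁, rfl⟩ <;>
      rcases mem_or_mul_mem_of_index_two' hC ht h with hh | ⟨y₂, hy₂, rfl⟩
    · rw [commutatorElement_eq_one_iff_mul_comm.mpr (hcomm _ hg _ hh)]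
      exact R.one_mem
    · exact key _ hg _ hy₂
    · rw [← commutatorElement_inv]
      exact R.inv_mem (key _ hh _ hy₁)
    · have hx : y₂ * y₁⁻¹ ∈ C := C.mul_mem hy₂ (C.inv_mem hy₁)
      have h2 : ⁅(y₂ * y₁⁻¹)⁻¹, t⁆ ∈ C := comm_elt_mem_of_index_two' hC (C.inv_mem hx) t
      have e2 : ⁅y₁ * t, y₂ * t⁆ = ⁅(y₂ * y₁⁻¹)⁻¹, t⁆ := by
        calc ⁅y₁ * t, y₂ * t⁆ = y₁ * (t * (y₂ * y₁⁻¹) * t⁻¹) * y₂⁻¹ := by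
              simp only [commutatorElement_def]; group
          _ = y₁ * ((y₂ * y₁⁻¹) * ⁅(y₂ * y₁⁻¹)⁻¹, t⁆) * y₂⁻¹ := by
              rw [show t * (y₂ * y₁⁻¹) * t⁻¹ = (y₂ * y₁⁻¹) * ⁅(y₂ * y₁⁻¹)⁻¹, t⁆ from by
                simp only [commutatorElement_def]; group]
          _ = (y₁ * (y₂ * y₁⁻¹)) * (⁅(y₂ * y₁⁻¹)⁻¹, t⁆ * y₂⁻¹) := by group
          _ = (y₁ * (y₂ * y₁⁻¹)) * (y₂⁻¹ * ⁅(y₂ * y₁⁻¹)⁻¹, t⁆) := by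
              rw [hcomm _ h2 _ (C.inv_mem hy₂)]
          _ = y₁ * y₂ * y₁⁻¹ * y₂⁻¹ * ⁅(y₂ * y₁⁻¹)⁻¹, t⁆ := by group
          _ = ⁅(y₂ * y₁⁻¹)⁻¹, t⁆ := by rw [hcomm _ hy₁ _ hy₂]; group
      rw [e2]
      exact hgen _ (C.inv_mem hx)
  · rw [hR, Subgroup.closure_le]
    rintro _ ⟨x, _, rfl⟩
    exact commutator_def Q ▸ Subgroup.commutator_mem_commutator (mem_top x) (mem_top t)

section BiLin
variable {C : Subgroup Q} (hC : C.index = 2)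
  (hcomm : ∀ x ∈ C, ∀ y ∈ C, x * y = y * x) (t : Q)

include hC hcomm

lemma comm_aux_mul {x y : Q} (hx : x ∈ C) (hy : y ∈ C) :
    ⁅x * y, t⁆ = ⁅x, t⁆ * ⁅y, t⁆ := by
  have h1 : t * x⁻¹ * t⁻¹ ∈ C := conj_mem_of_index_two' hC (C.inv_mem hx) t
  have h2 : ⁅y, t⁆ ∈ C := by
    have := conj_mem_of_index_two' hC (C.inv_mem hy) t
    have he : ⁅y, t⁆ = y * (t * y⁻¹ * t⁻¹) := by rw [commutatorElement_def]; group
    rw [he]; exact C.mul_mem hy this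
  have hc : ⁅y, t⁆ * (t * x⁻¹ * t⁻¹) = (t * x⁻¹ * t⁻¹) * ⁅y, t⁆ := hcomm _ h2 _ h1
  calc ⁅x * y, t⁆ = x * (⁅y, t⁆ * (t * x⁻¹ * t⁻¹)) := by
        simp only [commutatorElement_def]; group
    _ = x * ((t * x⁻¹ * t⁻¹) * ⁅y, t⁆) := by rw [hc]
    _ = ⁅x, t⁆ * ⁅y, t⁆ := by simp only [commutatorElement_def]; group

lemma comm_aux_pow {x : Q} (hx : x ∈ C) (n : ℕ) : ⁅x ^ n, t⁆ = ⁅x, t⁆ ^ n := by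
  induction n with
  | zero => simp [commutatorElement_def]
  | succ n ih =>
      rw [pow_succ, comm_aux_mul hC hcomm t (C.pow_mem hx n) hx, ih, pow_succ]

lemma comm_aux_zpow {x : Q} (hx : x ∈ C) (n : ℤ) : ⁅x ^ n, t⁆ = ⁅x, t⁆ ^ n := by
  have hinv : ⁅x⁻¹, t⁆ = ⁅x, t⁆⁻¹ := by
    have := comm_aux_mul hC hcomm t hx (C.inv_mem hx)
    rw [mul_inv_cancel] at this
    have h1 : (1:Q) = ⁅(1:Q), t⁆ := by simp [commutatorElement_def]
    rw [← h1] at this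
    rw [eq_inv_of_mul_eq_one_right this.symm]
  obtain ⟨n, rfl | rfl⟩ := Int.eq_nat_or_neg n
  · rw [zpow_natCast, zpow_natCast, comm_aux_pow hC hcomm t hx]
  · rw [zpow_neg, zpow_neg, zpow_natCast, zpow_natCast]
    have hxn : x ^ n ∈ C := C.pow_mem hx n
    have := comm_aux_mul hC hcomm t hxn (C.inv_mem hxn)
    rw [mul_inv_cancel] at this
    have h1 : (1:Q) = ⁅(1:Q), t⁆ := by simp [commutatorElement_def]
    rw [← h1] at this
    rw [eq_inv_of_mul_eq_one_right this.symm, comm_aux_pow hC hcomm t hx]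

end BiLin

end Helpers

section Helpers2
universe v
variable {Q : Type v} [Group Q]
lemma isCyclic_zpowers (g : Q) : IsCyclic (Subgroup.zpowers g) := by
  refine ⟨⟨⟨g, Subgroup.mem_zpowers g⟩, ?_⟩⟩
  rintro ⟨x, hx⟩
  obtain ⟨k, hk⟩ := Subgroup.mem_zpowers_iff.mp hx
  exact Subgroup.mem_zpowers_iff.mpr ⟨k, by ext; simp [← hk]⟩

lemma exists_orderOf_two (h2 : IsPGroup 2 Q) {g : Q} (hg : g ≠ 1) :
    ∃ m : ℕ, orderOf (g ^ m) = 2 := by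
  haveI : Fact (Nat.Prime 2) := ⟨Nat.prime_two⟩
  obtain ⟨k, hk⟩ := (IsPGroup.iff_orderOf.mp h2) g
  have hk0 : k ≠ 0 := by
    rintro rfl
    rw [pow_zero, orderOf_eq_one_iff] at hk
    exact hg hk
  obtain ⟨j, rfl⟩ : ∃ j, k = j + 1 := ⟨k - 1, by omega⟩
  refine ⟨2 ^ j, ?_⟩
  apply orderOf_eq_prime
  · rw [← pow_mul, ← pow_succ, ← hk, pow_orderOf_eq_one]
  · intro h1
    have hdvd : orderOf g ∣ 2 ^ j := orderOf_dvd_of_pow_eq_one h1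
    rw [hk] at hdvd
    have h2j : (2:ℕ) ^ j < 2 ^ (j + 1) := Nat.pow_lt_pow_succ (by norm_num)
    have := Nat.le_of_dvd (by positivity) hdvd
    omega

lemma subsingleton_center_quot {G : Type u} [Group G]
    (hcyc : IsCyclic (G ⧸ Subgroup.center G)) (q : G ⧸ Subgroup.center G) : q = 1 := by
  haveI := hcyc
  have hcom : ∀ a b : G, a * b = b * a :=
    commutative_of_cyclic_center_quotient (QuotientGroup.mk' (Subgroup.center G))
      (by rw [QuotientGroup.ker_mk'])
  have hc : Subgroup.center G = ⊤ := by
    rw [Subgroup.eq_top_iff']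
    intro g
    rw [Subgroup.mem_center_iff]
    exact fun b => hcom b g
  obtain ⟨g, rfl⟩ := QuotientGroup.mk'_surjective (Subgroup.center G) q
  exact (QuotientGroup.eq_one_iff g).mpr (by rw [hc]; trivial)

lemma commutator_eq_bot_of_cyclic_quot [Finite Q] (h2 : IsPGroup 2 Q)
    (hcyc : IsCyclic (Q ⧸ commutator Q)) : commutator Q = ⊥ := by
  haveI : Fact (Nat.Prime 2) := ⟨Nat.prime_two⟩
  set N : Subgroup Q := ⁅commutator Q, ⊤⁆ with hN
  haveI : N.Normal := Subgroup.commutator_normal _ _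
  have hNle : N ≤ commutator Q := by
    rw [commutator_def, hN]
    exact Subgroup.commutator_mono le_top le_rfl |>.trans le_rfl
  set π := QuotientGroup.mk' N with hπ
  haveI : ((commutator Q).map π).Normal :=
    Subgroup.Normal.map (by infer_instance) π (QuotientGroup.mk'_surjective N)
  have e := QuotientGroup.quotientQuotientEquivQuotient N (commutator Q) hNle
  haveI : IsCyclic ((Q ⧸ N) ⧸ (commutator Q).map π) :=
    isCyclic_of_surjective e.symm.toMonoidHom e.symm.surjective
  have hker : (QuotientGroup.mk' ((commutator Q).map π)).ker ≤ Subgroup.center (Q ⧸ N) := by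
    rw [QuotientGroup.ker_mk']
    rintro _ ⟨q, hq, rfl⟩
    rw [Subgroup.mem_center_iff]
    intro r
    induction r using QuotientGroup.induction_on with
    | H g =>
        have : ⁅q, g⁆ ∈ N := Subgroup.commutator_mem_commutator hq (Subgroup.mem_top g)
        have h1 : ⁅π q, π g⁆ = 1 := by
          rw [← map_commutatorElement]
          exact (QuotientGroup.eq_one_iff _).mpr this
        have := commutatorElement_eq_one_iff_mul_comm.mp h1
        exact this.symm
  have hcomR : ∀ a b : Q ⧸ N, a * b = b * a :=
    commutative_of_cyclic_center_quotient _ hker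
  have hle : commutator Q ≤ N := by
    rw [commutator_def, Subgroup.commutator_le]
    intro g _ h _
    have : π ⁅g, h⁆ = 1 := by
      rw [map_commutatorElement]
      exact commutatorElement_eq_one_iff_mul_comm.mpr (hcomR _ _)
    exact (QuotientGroup.eq_one_iff _).mp this
  have hall : ∀ n, commutator Q ≤ (⊤ : Subgroup Q).lowerCentralSeries n := by
    intro n
    induction n with
    | zero => exact le_top
    | succ n ih =>
        rw [_root_.lowerCentralSeries_succ]
        exact hle.trans (Subgroup.commutator_mono ih le_rfl)
  obtain ⟨n, hn⟩ := _root_.nilpotent_iff_lowerCentralSeries.mp h2.isNilpotent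
  exact le_bot_iff.mp (hn ▸ hall n)

end Helpers2

lemma int_two_pow_dvd_of_odd {f : ℕ} {x y : ℤ} (h : (2:ℤ) ^ f ∣ x * y) (hy : Odd y) :
    (2:ℤ) ^ f ∣ x := by
  induction f generalizing x with
  | zero => simpa using one_dvd x
  | succ f ih =>
      have h2 : (2:ℤ) ∣ x * y := dvd_trans (dvd_pow_self 2 (Nat.succ_ne_zero f)) h
      have hx2 : (2:ℤ) ∣ x := by
        rcases (Int.prime_two.dvd_mul.mp h2) with h | h
        · exact h
        · obtain ⟨c, hc⟩ := h
          exact absurd (⟨c, by omega⟩ : Even y) (Int.not_even_iff_odd.mpr hy)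
      obtain ⟨x', rfl⟩ := hx2
      have h3 : (2:ℤ) ^ f ∣ x' * y := by
        rw [pow_succ, mul_comm ((2:ℤ)^f) 2, mul_assoc] at h
        exact (mul_dvd_mul_iff_left (by norm_num : (2:ℤ) ≠ 0)).mp h
      rw [pow_succ, mul_comm ((2:ℤ)^f) 2]
      exact mul_dvd_mul_left 2 (ih h3)

lemma sq_cong_one_mod_pow {f : ℕ} {s : ℤ} (hodd : Odd s)
    (h : (2:ℤ) ^ (f + 2) ∣ s ^ 2 - 1) :
    (2:ℤ) ^ (f + 1) ∣ s - 1 ∨ (2:ℤ) ^ (f + 1) ∣ s + 1 := by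
  obtain ⟨a, rfl⟩ := hodd
  have hfac : (2 * a + 1) ^ 2 - 1 = 2 ^ 2 * (a * (a + 1)) := by ring
  rw [hfac] at h
  have hdvd : (2:ℤ) ^ f ∣ a * (a + 1) := by
    have h4 : ((2:ℤ) ^ 2) * 2 ^ f ∣ 2 ^ 2 * (a * (a + 1)) := by
      rw [← pow_add]
      convert h using 2
      omega
    exact (mul_dvd_mul_iff_left (by norm_num : ((2:ℤ)^2) ≠ 0)).mp h4
  rcases Int.even_or_odd a with he | ho
  · left
    have ho1 : Odd (a + 1) := he.add_one
    have := int_two_pow_dvd_of_odd hdvd ho1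
    have : (2:ℤ) ^ (f+1) ∣ 2 * a := by
      rw [pow_succ, mul_comm ((2:ℤ)^f) 2]
      exact mul_dvd_mul_left 2 this
    simpa [show 2 * a + 1 - 1 = 2 * a from by ring] using this
  · right
    have hdvd' : (2:ℤ) ^ f ∣ (a + 1) * a := by rwa [mul_comm] at hdvd
    have := int_two_pow_dvd_of_odd hdvd' ho
    have : (2:ℤ) ^ (f+1) ∣ 2 * (a + 1) := by
      rw [pow_succ, mul_comm ((2:ℤ)^f) 2]
      exact mul_dvd_mul_left 2 this
    simpa [show 2 * a + 1 + 1 = 2 * (a + 1) from by ring] using this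


section Main
variable {Q : Type u} [Group Q]
lemma commutator_eq_zpowers {C : Subgroup Q} (hC : C.index = 2)
    (hcomm : ∀ x ∈ C, ∀ y ∈ C, x * y = y * x) {t u z : Q} (ht : t ∉ C)
    (hu : u ∈ C) (hzC : z ∈ C) (hzc : z ∈ Subgroup.center Q)
    (hdec : ∀ x ∈ C, ∃ k j : ℤ, x = u ^ k * z ^ j) :
    commutator Q = Subgroup.zpowers ⁅u, t⁆ := by
  rw [commutator_eq_closure_comm hC hcomm ht]
  apply le_antisymm
  · rw [Subgroup.closure_le]
    rintro _ ⟨x, hx, rfl⟩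
    simp only [SetLike.mem_coe]
    obtain ⟨k, j, rfl⟩ := hdec x hx
    have hz1 : ⁅z, t⁆ = 1 :=
      commutatorElement_eq_one_iff_mul_comm.mpr ((Subgroup.mem_center_iff.mp hzc t).symm)
    have he : ⁅u ^ k * z ^ j, t⁆ = ⁅u, t⁆ ^ k * ⁅z, t⁆ ^ j := by
      rw [comm_aux_mul hC hcomm t (C.zpow_mem hu k) (C.zpow_mem hzC j),
        comm_aux_zpow hC hcomm t hu, comm_aux_zpow hC hcomm t hzC]
    rw [he, hz1, one_zpow, mul_one]
    exact Subgroup.zpow_mem _ (Subgroup.mem_zpowers _) k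
  · rw [Subgroup.zpowers_le]
    exact Subgroup.subset_closure ⟨u, hu, rfl⟩

lemma closure_pair_top {c t : Q} (hC : (Subgroup.zpowers c).index = 2)
    (ht : t ∉ Subgroup.zpowers c) : Subgroup.closure {c, t} = ⊤ := by
  rw [eq_top_iff']
  intro g
  have hc : c ∈ Subgroup.closure {c, t} := Subgroup.subset_closure (by simp)
  have htm : t ∈ Subgroup.closure {c, t} := Subgroup.subset_closure (by simp)
  rcases mem_or_mul_mem_of_index_two' hC ht g with hg | ⟨y, hy, rfl⟩
  · obtain ⟨k, rfl⟩ := Subgroup.mem_zpowers_iff.mp hg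
    exact Subgroup.zpow_mem _ hc k
  · obtain ⟨k, rfl⟩ := Subgroup.mem_zpowers_iff.mp hy
    exact Subgroup.mul_mem _ (Subgroup.zpow_mem _ hc k) htm

lemma taussky_cyclic_index_two :
    ∀ (n : ℕ) (Q : Type u) [Group Q] [Finite Q], Nat.card Q ≤ n → IsPGroup 2 Q →
      (¬ ∀ a b : Q, a * b = b * a) → (commutator Q).index = 4 →
      ∃ c : Q, (Subgroup.zpowers c).index = 2 := by
  intro n
  induction n using Nat.strong_induction_on with
  | _ n IH =>
  intro Q _ _ hcard h2 hna hidx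
  classical
  haveI : Fact (Nat.Prime 2) := ⟨Nat.prime_two⟩
  have hcne : commutator Q ≠ ⊥ := by
    intro h
    apply hna
    intro a b
    have hm : ⁅a, b⁆ ∈ commutator Q :=
      commutator_def Q ▸ Subgroup.commutator_mem_commutator (mem_top a) (mem_top b)
    rw [h, Subgroup.mem_bot] at hm
    exact commutatorElement_eq_one_iff_mul_comm.mp hm
  have hccard : 2 ≤ Nat.card (commutator Q) := (Subgroup.one_lt_card_iff_ne_bot _).mpr hcne
  have hmcard : Nat.card (commutator Q) * 4 = Nat.card Q := by
    rw [← hidx]; exact Subgroup.card_mul_index _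
  have hQ8 : 8 ≤ Nat.card Q := by omega
  -- find a central element z of order 2 inside the commutator subgroup
  obtain ⟨n₀, hn₀⟩ := _root_.nilpotent_iff_lowerCentralSeries.mp h2.isNilpotent
  have hex : ∃ i, (⊤ : Subgroup Q).lowerCentralSeries i = ⊥ := ⟨n₀, hn₀⟩
  have h0 : (⊤ : Subgroup Q).lowerCentralSeries 0 ≠ ⊥ := by
    rw [_root_.lowerCentralSeries_zero]
    intro htop
    apply hna
    intro a b
    have ha : a ∈ (⊥ : Subgroup Q) := htop ▸ Subgroup.mem_top a
    have hb : b ∈ (⊥ : Subgroup Q) := htop ▸ Subgroup.mem_top b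
    rw [Subgroup.mem_bot] at ha hb
    rw [ha, hb]
  have h1' : (⊤ : Subgroup Q).lowerCentralSeries 1 ≠ ⊥ := by rw [_root_.lowerCentralSeries_one]; exact hcne
  have hfind2 : 2 ≤ Nat.find hex := by
    by_contra hlt
    have : Nat.find hex = 0 ∨ Nat.find hex = 1 := by omega
    rcases this with h' | h'
    · exact h0 (h' ▸ Nat.find_spec hex)
    · exact h1' (h' ▸ Nat.find_spec hex)
  set k' := Nat.find hex - 1 with hk'def
  have hk'1 : 1 ≤ k' := by omega
  have hsucc : k' + 1 = Nat.find hex := by omega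
  have hk'spec : (⊤ : Subgroup Q).lowerCentralSeries (k' + 1) = ⊥ := hsucc ▸ Nat.find_spec hex
  have hk'ne : (⊤ : Subgroup Q).lowerCentralSeries k' ≠ ⊥ := Nat.find_min hex (by omega)
  set N := (⊤ : Subgroup Q).lowerCentralSeries k' with hNdef
  have hNcomm : N ≤ commutator Q := by
    rw [← _root_.lowerCentralSeries_one]
    exact _root_.lowerCentralSeries_antitone ⊤ hk'1
  have hNcent : N ≤ Subgroup.center Q := by
    intro x hx
    rw [Subgroup.mem_center_iff]
    intro g
    have hm : ⁅x, g⁆ ∈ (⊤ : Subgroup Q).lowerCentralSeries (k' + 1) := by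
      rw [_root_.lowerCentralSeries_succ]
      exact Subgroup.commutator_mem_commutator hx (mem_top g)
    rw [hk'spec, Subgroup.mem_bot] at hm
    exact (commutatorElement_eq_one_iff_mul_comm.mp hm).symm
  obtain ⟨z₀', hz₀ne⟩ := Subgroup.ne_bot_iff_exists_ne_one.mp hk'ne
  obtain ⟨m, hord⟩ := exists_orderOf_two h2 (by
    intro h
    exact hz₀ne (Subtype.ext h))
  set z := (z₀' : Q) ^ m with hzdef
  have hzN : z ∈ N := Subgroup.pow_mem _ z₀'.2 m
  have hzcent : z ∈ Subgroup.center Q := hNcent hzN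
  have hzcomm : z ∈ commutator Q := hNcomm hzN
  have hz2 : z ^ 2 = 1 := by rw [← hord]; exact pow_orderOf_eq_one z
  have hzne : z ≠ 1 := by
    intro h
    rw [h, orderOf_one] at hord
    omega
  set K := Subgroup.zpowers z with hKdef
  haveI hKnormal : K.Normal := by
    constructor
    intro x hx g
    obtain ⟨j, hj⟩ := Subgroup.mem_zpowers_iff.mp hx
    rw [← hj]
    have hcentj : z ^ j ∈ Subgroup.center Q := Subgroup.zpow_mem _ hzcent j
    have he : g * z ^ j * g⁻¹ = z ^ j := by
      rw [Subgroup.mem_center_iff.mp hcentj g]; group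
    rw [he]
    exact Subgroup.zpow_mem _ (Subgroup.mem_zpowers z) j
  have cardK : Nat.card K = 2 := by rw [Nat.card_zpowers]; exact hord
  have hKle : K ≤ commutator Q := (Subgroup.zpowers_le).mpr hzcomm
  have hKcent : K ≤ Subgroup.center Q := (Subgroup.zpowers_le).mpr hzcent
  set π := QuotientGroup.mk' K with hπdef
  have hπs : Function.Surjective π := QuotientGroup.mk'_surjective K
  have hmap : commutator (Q ⧸ K) = Subgroup.map π (commutator Q) := by
    rw [_root_.commutator_def, _root_.commutator_def, Subgroup.map_commutator,
      Subgroup.map_top_of_surjective π hπs]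
  have hidxQK : (commutator (Q ⧸ K)).index = 4 := by
    rw [hmap, ← Subgroup.index_comap_of_surjective _ hπs, Subgroup.comap_map_eq,
      QuotientGroup.ker_mk', sup_of_le_left hKle, hidx]
  by_cases hQKab : ∀ a b : Q ⧸ K, a * b = b * a
  · -- base case : |Q| = 8
    have hle : commutator Q ≤ K := by
      rw [_root_.commutator_def, Subgroup.commutator_le]
      intro g _ h _
      have h1 : π ⁅g, h⁆ = 1 := by
        rw [map_commutatorElement]
        exact commutatorElement_eq_one_iff_mul_comm.mpr (hQKab _ _)
      exact (QuotientGroup.eq_one_iff _).mp h1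
    have hc2 : Nat.card (commutator Q) = 2 :=
      le_antisymm (cardK ▸ Subgroup.card_le_of_le hle) hccard
    have hcQ : Nat.card Q = 8 := by omega
    have hgex : ∃ g : Q, ¬ g ^ 2 = 1 := by
      by_contra hall
      push_neg at hall
      apply hna
      intro a b
      have inv_eq : ∀ x : Q, x⁻¹ = x := fun x =>
        inv_eq_of_mul_eq_one_right (by rw [← pow_two]; exact hall x)
      calc a * b = ((a * b)⁻¹)⁻¹ := by rw [inv_inv]
        _ = (b⁻¹ * a⁻¹)⁻¹ := by rw [mul_inv_rev]
        _ = (b * a)⁻¹⁻¹ := by rw [inv_eq b, inv_eq a, inv_eq (b * a), inv_eq (b*a)]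
        _ = b * a := by rw [inv_inv]
    obtain ⟨g, hg2⟩ := hgex
    obtain ⟨kg, hkg⟩ := (IsPGroup.iff_orderOf.mp h2) g
    have hdvd : orderOf g ∣ 8 := hcQ ▸ orderOf_dvd_natCard g
    have hkg3 : kg ≤ 3 := by
      by_contra hgt
      have : (2:ℕ) ^ 4 ≤ 2 ^ kg := Nat.pow_le_pow_right (by norm_num) (by omega)
      have := Nat.le_of_dvd (by norm_num) hdvd
      omega
    have hkg2 : 2 ≤ kg := by
      by_contra hlt
      apply hg2
      have : orderOf g ∣ 2 := by
        rw [hkg]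
        exact (Nat.pow_dvd_pow 2 (by omega : kg ≤ 1)).trans (by norm_num)
      exact orderOf_dvd_iff_pow_eq_one.mp this
    rcases (by omega : kg = 2 ∨ kg = 3) with h' | h'
    · refine ⟨g, ?_⟩
      have hcm := Subgroup.card_mul_index (Subgroup.zpowers g)
      rw [Nat.card_zpowers, hkg, h', hcQ] at hcm
      norm_num at hcm
      omega
    · exfalso
      have hcyc : IsCyclic Q := isCyclic_of_orderOf_eq_card g (by rw [hkg, h', hcQ]; norm_num)
      obtain ⟨gen, hgen⟩ := hcyc.exists_generator
      apply hna
      intro a b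
      obtain ⟨i, hi⟩ := Subgroup.mem_zpowers_iff.mp (hgen a)
      obtain ⟨j, hj⟩ := Subgroup.mem_zpowers_iff.mp (hgen b)
      rw [← hi, ← hj, ← zpow_add, ← zpow_add, add_comm]
  · -- inductive case
    have cardQK : Nat.card (Q ⧸ K) * 2 = Nat.card Q := by
      have := Subgroup.card_mul_index K
      rw [cardK] at this
      have hind : K.index = Nat.card (Q ⧸ K) := rfl
      omega
    have hpos : 0 < Nat.card (Q ⧸ K) := Nat.card_pos
    have hlt : Nat.card (Q ⧸ K) < n := by omega
    obtain ⟨cb, hcb⟩ := IH _ hlt (Q ⧸ K) le_rfl (h2.to_quotient K) hQKab hidxQK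
    set C := Subgroup.comap π (Subgroup.zpowers cb) with hCdef
    have hCidx : C.index = 2 := by
      rw [hCdef, Subgroup.index_comap_of_surjective _ hπs, hcb]
    have hzC : z ∈ C := by
      rw [hCdef, Subgroup.mem_comap]
      have h1 : π z = 1 := (QuotientGroup.eq_one_iff z).mpr (Subgroup.mem_zpowers z)
      rw [h1]; exact Subgroup.one_mem _
    haveI := _root_.isCyclic_zpowers cb
    have hcommC : ∀ x ∈ C, ∀ y ∈ C, x * y = y * x := by
      set f : C →* Subgroup.zpowers cb :=
        MonoidHom.codRestrict (π.domRestrict C) _ (fun x => Subgroup.mem_comap.mp x.2) with hfdef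
      have hker : f.ker ≤ Subgroup.center C := by
        intro x hx
        rw [MonoidHom.mem_ker] at hx
        have hx1 : π (x : Q) = 1 := by
          have h2' := congrArg (Subtype.val) hx
          simpa [hfdef] using h2'
        have hxK : (x : Q) ∈ K := (QuotientGroup.eq_one_iff _).mp hx1
        have hxc : (x : Q) ∈ Subgroup.center Q := hKcent hxK
        rw [Subgroup.mem_center_iff]
        intro y
        apply Subtype.ext
        simpa using Subgroup.mem_center_iff.mp hxc (y : Q)
      have hcc := commutative_of_cyclic_center_quotient f hker
      intro x hx y hy
      have := congrArg Subtype.val (hcc ⟨x, hx⟩ ⟨y, hy⟩)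
      simpa using this
    obtain ⟨u, hu⟩ := hπs cb
    have huC : u ∈ C := by rw [hCdef, Subgroup.mem_comap, hu]; exact Subgroup.mem_zpowers cb
    set oc := orderOf cb with hocdef
    have hoc2 : oc * 2 = Nat.card (Q ⧸ K) := by
      have h1 := Subgroup.card_mul_index (Subgroup.zpowers cb)
      rw [Nat.card_zpowers, hcb] at h1
      exact h1
    have hocpos : 0 < oc := orderOf_pos cb
    have hdec : ∀ x ∈ C, ∃ k j : ℤ, x = u ^ k * z ^ j := by
      intro x hx
      rw [hCdef, Subgroup.mem_comap] at hx
      obtain ⟨k, hk⟩ := Subgroup.mem_zpowers_iff.mp hx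
      have h1 : π (x * (u ^ k)⁻¹) = 1 := by
        rw [map_mul, map_inv, map_zpow, hu, hk]
        group
      have h2' : x * (u ^ k)⁻¹ ∈ K := (QuotientGroup.eq_one_iff _).mp h1
      obtain ⟨j, hj⟩ := Subgroup.mem_zpowers_iff.mp h2'
      refine ⟨k, j, ?_⟩
      have hcent : z ^ j ∈ Subgroup.center Q := Subgroup.zpow_mem _ hzcent j
      have hx' : x = z ^ j * u ^ k := by rw [hj]; group
      rw [hx']
      exact (Subgroup.mem_center_iff.mp hcent (u ^ k)).symm
    have hdvd1 : oc ∣ orderOf u := by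
      rw [hocdef, ← hu]
      exact orderOf_map_dvd π u
    have horderu_dvd : orderOf u ∣ Nat.card C := by
      have h1 : orderOf u = orderOf (⟨u, huC⟩ : C) := (Subgroup.orderOf_mk u huC).symm
      rw [h1]
      exact orderOf_dvd_natCard _
    have hcardC2 : Nat.card C * 2 = Nat.card Q := by
      have h1 := Subgroup.card_mul_index C
      rw [hCidx] at h1; exact h1
    have hcardC' : Nat.card C = oc * 2 := by omega
    obtain ⟨d, hd⟩ := hdvd1
    have hddvd : d ∣ 2 := by
      have h1 : oc * d ∣ oc * 2 := by rw [← hd, ← hcardC']; exact horderu_dvd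
      exact (mul_dvd_mul_iff_left (by omega : oc ≠ 0)).mp h1
    rcases (Nat.prime_two.eq_one_or_self_of_dvd d hddvd) with hd1 | hd2
    · -- orderOf u = oc : derive a contradiction
      exfalso
      have hou : orderOf u = oc := by rw [hd, hd1, mul_one]
      have hcneQK : commutator (Q ⧸ K) ≠ ⊥ := by
        intro h
        apply hQKab
        intro a b
        have hm : ⁅a, b⁆ ∈ commutator (Q ⧸ K) := by
          rw [_root_.commutator_def]
          exact Subgroup.commutator_mem_commutator (mem_top a) (mem_top b)
        rw [h, Subgroup.mem_bot] at hm
        exact commutatorElement_eq_one_iff_mul_comm.mp hm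
      have hccQK : 2 ≤ Nat.card (commutator (Q ⧸ K)) :=
        (Subgroup.one_lt_card_iff_ne_bot _).mpr hcneQK
      have hmQK : Nat.card (commutator (Q ⧸ K)) * 4 = Nat.card (Q ⧸ K) := by
        rw [← hidxQK]; exact Subgroup.card_mul_index _
      have hoc4 : 4 ≤ oc := by omega
      have hznu : z ∉ Subgroup.zpowers u := by
        intro hzu
        have hCle : C ≤ Subgroup.zpowers u := by
          intro x hx
          obtain ⟨k, j, rfl⟩ := hdec x hx
          exact Subgroup.mul_mem _ (Subgroup.zpow_mem _ (Subgroup.mem_zpowers u) k)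
            (Subgroup.zpow_mem _ hzu j)
        have h1 := Subgroup.card_le_of_le hCle
        rw [Nat.card_zpowers, hou, hcardC'] at h1
        omega
      obtain ⟨t, ht⟩ : ∃ t, t ∉ C := by
        by_contra hall
        push_neg at hall
        have h1 : C = ⊤ := (Subgroup.eq_top_iff' C).mpr hall
        rw [h1, Subgroup.index_top] at hCidx
        omega
      set w := ⁅u, t⁆ with hwdef
      have hcomm_eq : commutator Q = Subgroup.zpowers w :=
        commutator_eq_zpowers hCidx hcommC ht huC hzC hzcent hdec
      have hcardw : orderOf w = oc := by
        have h1 := Subgroup.card_mul_index (commutator Q)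
        rw [hidx] at h1
        have h2' : Nat.card (commutator Q) = oc := by omega
        rw [hcomm_eq, Nat.card_zpowers] at h2'
        exact h2'
      have hzw : z ∈ Subgroup.zpowers w := hcomm_eq ▸ hzcomm
      obtain ⟨k₀, hk₀⟩ := Subgroup.mem_zpowers_iff.mp hzw
      have hconjC : t * u * t⁻¹ ∈ C := conj_mem_of_index_two' hCidx huC t
      obtain ⟨a, ε, hconj⟩ := hdec _ hconjC
      have hz_swap : ∀ (j : ℤ) (g : Q), g * z ^ j = z ^ j * g := fun j g =>
        Subgroup.mem_center_iff.mp (Subgroup.zpow_mem _ hzcent j) g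
      have hz1Z : z ^ (2:ℤ) = 1 := by
        rw [show (2:ℤ) = ((2:ℕ):ℤ) from rfl, zpow_natCast, hz2]
      have hw_eq : w = u ^ (1 - a) * z ^ (-ε) := by
        rw [hwdef, commutatorElement_def]
        have h1 : u * t * u⁻¹ * t⁻¹ = u * (t * u * t⁻¹)⁻¹ := by group
        rw [h1, hconj, mul_inv_rev, ← zpow_neg, ← zpow_neg]
        rw [show z ^ (-ε) * u ^ (-a) = u ^ (-a) * z ^ (-ε) from (hz_swap (-ε) (u ^ (-a))).symm,
          ← mul_assoc,
          show u * u ^ (-a) = u ^ (1 - a) from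
            (by rw [sub_eq_add_neg, zpow_add, zpow_one] :
              u ^ (1 - a) = u * u ^ (-a)).symm]
      have hcomm_uz : ∀ α β : ℤ, Commute (u ^ α) (z ^ β) := fun α β => hz_swap β (u ^ α)
      obtain ⟨kk, hkk⟩ := (IsPGroup.iff_orderOf.mp (h2.to_quotient K)) cb
      have hkk2 : 2 ≤ kk := by
        by_contra hlt2
        have h1 : oc ≤ 2 := by
          rw [hocdef, hkk]
          calc (2:ℕ) ^ kk ≤ 2 ^ 1 := Nat.pow_le_pow_right (by norm_num) (by omega)
            _ = 2 := by norm_num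
        omega
      obtain ⟨mm, hmm⟩ : ∃ mm, kk = mm + 2 := ⟨kk - 2, by omega⟩
      have hoc_eq : oc = 2 ^ (mm + 2) := by rw [hocdef, hkk, hmm]
      have hu1 : u ^ ((2:ℤ) ^ (mm + 2)) = 1 := by
        rw [← orderOf_dvd_iff_zpow_eq_one, hou, hoc_eq]
        push_cast
        rfl
      rcases Int.even_or_odd (1 - a) with hpar | hpar
      · obtain ⟨b, hb⟩ := hpar
        have hwpow : w ^ ((2:ℤ) ^ (mm + 1)) = 1 := by
          rw [hw_eq, (hcomm_uz (1-a) (-ε)).mul_zpow, ← zpow_mul, ← zpow_mul]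
          have e1 : (1 - a) * 2 ^ (mm + 1) = ((2:ℤ) ^ (mm + 2)) * b := by rw [hb]; ring
          have e2 : (-ε) * 2 ^ (mm + 1) = 2 * (-ε * 2 ^ mm) := by ring
          rw [e1, e2, zpow_mul, zpow_mul, hu1, hz1Z, one_zpow, one_zpow, one_mul]
        have hdvdw : orderOf w ∣ 2 ^ (mm + 1) := by
          have h1 := orderOf_dvd_iff_zpow_eq_one.mpr hwpow
          rw [show ((2:ℤ) ^ (mm+1)) = (((2 ^ (mm+1) : ℕ)) : ℤ) from by push_cast; ring] at h1
          exact_mod_cast h1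
        rw [hcardw, hoc_eq] at hdvdw
        have h1 := Nat.le_of_dvd (by positivity) hdvdw
        have h2' : (2:ℕ) ^ (mm + 1) < 2 ^ (mm + 2) :=
          Nat.pow_lt_pow_right (by norm_num) (by omega)
        omega
      · have hwk : w ^ k₀ = u ^ ((1 - a) * k₀) * z ^ ((-ε) * k₀) := by
          rw [hw_eq, (hcomm_uz (1-a) (-ε)).mul_zpow, ← zpow_mul, ← zpow_mul]
        have hzeq : z = u ^ ((1 - a) * k₀) * z ^ ((-ε) * k₀) := by rw [← hwk, hk₀]
        have hmemz : ∀ X : ℤ, z ^ ((-ε) * k₀) = 1 → False := by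
          intro _ hone
          apply hznu
          have h1 : z = u ^ ((1 - a) * k₀) := by rw [hzeq, hone, mul_one]
          rw [h1]
          exact Subgroup.zpow_mem _ (Subgroup.mem_zpowers u) _
        rcases Int.even_or_odd k₀ with hk₀e | hk₀o
        · obtain ⟨b₀, hb₀⟩ := hk₀e
          apply hmemz 0
          have e1 : (-ε) * k₀ = 2 * ((-ε) * b₀) := by rw [hb₀]; ring
          rw [e1, zpow_mul, hz1Z, one_zpow]
        · rcases Int.even_or_odd ε with hεe | hεo
          · obtain ⟨b₁, hb₁⟩ := hεe
            apply hmemz 0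
            have e1 : (-ε) * k₀ = 2 * ((-b₁) * k₀) := by rw [hb₁]; ring
            rw [e1, zpow_mul, hz1Z, one_zpow]
          · have hzY : z ^ ((-ε) * k₀) = z := by
              obtain ⟨r, hr⟩ := (hεo.neg).mul hk₀o
              rw [hr, zpow_add, zpow_mul, hz1Z, one_zpow, one_mul, zpow_one]
            have hX : u ^ ((1 - a) * k₀) = 1 := by
              have h1 := hzeq
              rw [hzY] at h1
              have h2' : u ^ ((1 - a) * k₀) * z = 1 * z := by rw [one_mul]; exact h1.symm
              exact mul_right_cancel h2'
            have hdvdX : ((oc : ℕ) : ℤ) ∣ (1 - a) * k₀ := by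
              rw [← hou]
              exact orderOf_dvd_iff_zpow_eq_one.mpr hX
            have hXodd : Odd ((1 - a) * k₀) := hpar.mul hk₀o
            have h2oc : (2:ℤ) ∣ ((oc : ℕ) : ℤ) := by
              rw [hoc_eq]
              push_cast
              exact dvd_pow_self 2 (by omega)
            have hXeven : Even ((1 - a) * k₀) := by
              obtain ⟨c', hc'⟩ := h2oc.trans hdvdX
              exact ⟨c', by omega⟩
            exact (Int.not_even_iff_odd.mpr hXodd) hXeven
    · refine ⟨u, ?_⟩
      have h1 := Subgroup.card_mul_index (Subgroup.zpowers u)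
      rw [Nat.card_zpowers, hd, hd2] at h1
      have hq : Nat.card Q = oc * 2 * 2 := by omega
      rw [hq] at h1
      exact Nat.eq_of_mul_eq_mul_left (by omega) h1

lemma mem_center_of_commutes {G : Type u} [Group G] {C₀ T X : G}
    (htop : Subgroup.closure {QuotientGroup.mk' (Subgroup.center G) C₀,
      QuotientGroup.mk' (Subgroup.center G) T} = ⊤)
    (h1 : C₀ * X = X * C₀) (h2 : T * X = X * T) : X ∈ Subgroup.center G := by
  set π := QuotientGroup.mk' (Subgroup.center G) with hπ
  rw [Subgroup.mem_center_iff]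
  intro g
  have hmap : Subgroup.map π (Subgroup.closure {C₀, T}) = ⊤ := by
    rw [MonoidHom.map_closure, Set.image_pair, htop]
  have hg : π g ∈ Subgroup.map π (Subgroup.closure {C₀, T}) := by rw [hmap]; trivial
  obtain ⟨h, hh, hhg⟩ := hg
  have hz : g * h⁻¹ ∈ Subgroup.center G := by
    have h3 : π (g * h⁻¹) = 1 := by rw [map_mul, map_inv, hhg]; group
    exact (QuotientGroup.eq_one_iff _).mp h3
  have hcent : Subgroup.closure ({C₀, T} : Set G) ≤ Subgroup.centralizer {X} := by
    rw [Subgroup.closure_le]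
    intro y hy
    simp only [Set.mem_insert_iff, Set.mem_singleton_iff] at hy
    rcases hy with rfl | rfl
    · exact Subgroup.mem_centralizer_iff.mpr (by rintro s rfl; exact h1.symm)
    · exact Subgroup.mem_centralizer_iff.mpr (by rintro s rfl; exact h2.symm)
  have hXh : h * X = X * h := by
    have := Subgroup.mem_centralizer_iff.mp (hcent hh) X rfl
    exact this.symm
  have hXz : (g * h⁻¹) * X = X * (g * h⁻¹) := (Subgroup.mem_center_iff.mp hz X).symm
  calc g * X = (g * h⁻¹) * (h * X) := by group
    _ = (g * h⁻¹) * (X * h) := by rw [hXh]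
    _ = ((g * h⁻¹) * X) * h := by group
    _ = (X * (g * h⁻¹)) * h := by rw [hXz]
    _ = X * g := by group

lemma dihedral_gens_of_index_four {G : Type u} [Group G] [Finite G] (hG : IsPGroup 2 G)
    (hab : ¬ ∀ a b : G ⧸ Subgroup.center G, a * b = b * a)
    (hidx : (commutator (G ⧸ Subgroup.center G)).index = 4) :
    ∃ x y : G ⧸ Subgroup.center G,
      orderOf x = 2 ∧ orderOf y = 2 ∧ Subgroup.closure {x, y} = ⊤ := by
  classical
  haveI : Fact (Nat.Prime 2) := ⟨Nat.prime_two⟩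
  set π := QuotientGroup.mk' (Subgroup.center G) with hπdef
  have hπs : Function.Surjective π := QuotientGroup.mk'_surjective _
  set Q := G ⧸ Subgroup.center G with hQdef
  have h2Q : IsPGroup 2 Q := hG.to_quotient _
  obtain ⟨c, hcidx⟩ := taussky_cyclic_index_two (Nat.card Q) Q le_rfl h2Q hab hidx
  have hcne : commutator Q ≠ ⊥ := by
    intro h
    apply hab
    intro a b
    have hm : ⁅a, b⁆ ∈ commutator Q := by
      rw [_root_.commutator_def]
      exact Subgroup.commutator_mem_commutator (mem_top a) (mem_top b)
    rw [h, Subgroup.mem_bot] at hm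
    exact commutatorElement_eq_one_iff_mul_comm.mp hm
  have hccard : 2 ≤ Nat.card (commutator Q) := (Subgroup.one_lt_card_iff_ne_bot _).mpr hcne
  have hmcard : Nat.card (commutator Q) * 4 = Nat.card Q := by
    rw [← hidx]; exact Subgroup.card_mul_index _
  have hcardc : orderOf c * 2 = Nat.card Q := by
    have h1 := Subgroup.card_mul_index (Subgroup.zpowers c)
    rw [Nat.card_zpowers, hcidx] at h1
    exact h1
  obtain ⟨ke, hke⟩ := (IsPGroup.iff_orderOf.mp h2Q) c
  have hke2 : 2 ≤ ke := by
    by_contra h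
    have h1 : orderOf c ≤ 2 := by
      rw [hke]
      calc (2:ℕ) ^ ke ≤ 2 ^ 1 := Nat.pow_le_pow_right (by norm_num) (by omega)
        _ = 2 := by norm_num
    omega
  obtain ⟨f, rfl⟩ : ∃ f, ke = f + 2 := ⟨ke - 2, by omega⟩
  have hordc : orderOf c = 2 ^ (f + 2) := hke
  obtain ⟨t, ht⟩ : ∃ t, t ∉ Subgroup.zpowers c := by
    by_contra hall
    push_neg at hall
    have h1 : Subgroup.zpowers c = ⊤ := (Subgroup.eq_top_iff' _).mpr hall
    rw [h1, Subgroup.index_top] at hcidx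
    omega
  have hcommC : ∀ x ∈ Subgroup.zpowers c, ∀ y ∈ Subgroup.zpowers c, x * y = y * x := by
    intro x hx y hy
    obtain ⟨i, hi⟩ := Subgroup.mem_zpowers_iff.mp hx
    obtain ⟨j, hj⟩ := Subgroup.mem_zpowers_iff.mp hy
    rw [← hi, ← hj, ← zpow_add, ← zpow_add, add_comm]
  set z := c ^ ((2:ℤ) ^ (f + 1)) with hzdef
  have hzC : z ∈ Subgroup.zpowers c := Subgroup.zpow_mem _ (Subgroup.mem_zpowers c) _
  have hcpow_ord : c ^ ((2:ℤ) ^ (f + 2)) = 1 := by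
    rw [← orderOf_dvd_iff_zpow_eq_one, hordc]
    push_cast
    rfl
  have hz2 : z ^ (2:ℤ) = 1 := by
    rw [hzdef, ← zpow_mul, show ((2:ℤ) ^ (f + 1) * 2) = (2:ℤ) ^ (f + 2) from by ring]
    exact hcpow_ord
  have hzne : z ≠ 1 := by
    intro h
    have h1 := orderOf_dvd_iff_zpow_eq_one.mpr h
    rw [hordc] at h1
    rw [show ((2:ℤ) ^ (f + 1)) = (((2 ^ (f + 1) : ℕ)) : ℤ) from by push_cast; ring] at h1
    rw [Int.natCast_dvd_natCast] at h1
    have h2 := Nat.le_of_dvd (by positivity) h1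
    have h3 : (2:ℕ) ^ (f + 1) < 2 ^ (f + 2) := Nat.pow_lt_pow_right (by norm_num) (by omega)
    omega
  have hconjC : t * c * t⁻¹ ∈ Subgroup.zpowers c :=
    conj_mem_of_index_two' hcidx (Subgroup.mem_zpowers c) t
  obtain ⟨s, hs⟩ := Subgroup.mem_zpowers_iff.mp hconjC
  have hconj_zpow : ∀ i : ℤ, t * c ^ i * t⁻¹ = c ^ (s * i) := by
    intro i
    rw [zpow_mul, hs]
    exact (conj_zpow).symm
  have hsodd : Odd s := by
    rcases Int.even_or_odd s with hse | hso
    · exfalso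
      obtain ⟨r, hr⟩ := hse
      have h1 : t * z * t⁻¹ = 1 := by
        rw [hzdef, hconj_zpow,
          show s * (2:ℤ) ^ (f + 1) = (2:ℤ) ^ (f + 2) * r from by rw [hr]; ring,
          zpow_mul, hcpow_ord, one_zpow]
      have h2 : z = 1 := by
        have h3 : t * z = t := by
          calc t * z = (t * z * t⁻¹) * t := by group
            _ = 1 * t := by rw [h1]
            _ = t := one_mul t
        exact mul_left_cancel (a := t) (by rw [mul_one]; exact h3)
      exact hzne h2
    · exact hso
  -- t² ∈ zpowers c
  obtain ⟨d, hd⟩ := Subgroup.mem_zpowers_iff.mp (Subgroup.mul_self_mem_of_index_two hcidx t)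
  have hss : c ^ (s * s - 1) = 1 := by
    have h1 : t * (t * c * t⁻¹) * t⁻¹ = c ^ (s * s) := by
      rw [← hs, hconj_zpow s]
    have h2 : t * (t * c * t⁻¹) * t⁻¹ = c := by
      have e1 : t * (t * c * t⁻¹) * t⁻¹ = (t * t) * c * (t * t)⁻¹ := by group
      rw [e1, ← hd]
      have hcm : c ^ d * c = c * c ^ d := ((Commute.refl c).zpow_left d).eq
      rw [hcm]
      group
    rw [zpow_sub, zpow_one, ← h1, h2, mul_inv_cancel]
  have hdvd_ss : ((2:ℤ) ^ (f + 2)) ∣ s ^ 2 - 1 := by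
    have h1 := orderOf_dvd_iff_zpow_eq_one.mpr
      (by rw [show s ^ 2 - 1 = s * s - 1 from by ring]; exact hss :
        c ^ (s ^ 2 - 1) = 1)
    rw [hordc] at h1
    push_cast at h1
    exact h1
  -- commutator Q = zpowers ⁅c, t⁆
  have hdecC : ∀ x ∈ Subgroup.zpowers c, ∃ k' j : ℤ, x = c ^ k' * (1 : Q) ^ j := by
    intro x hx
    obtain ⟨i, hi⟩ := Subgroup.mem_zpowers_iff.mp hx
    exact ⟨i, 0, by rw [← hi, one_zpow, mul_one]⟩
  have hce : commutator Q = Subgroup.zpowers ⁅c, t⁆ :=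
    commutator_eq_zpowers hcidx hcommC ht (Subgroup.mem_zpowers c)
      (Subgroup.one_mem _) (Subgroup.one_mem _) hdecC
  -- reduce to the case 2^(f+1) ∣ s + 1
  have hR : ((2:ℤ) ^ (f + 1)) ∣ s + 1 := by
    rcases sq_cong_one_mod_pow hsodd hdvd_ss with hL | hR'
    · obtain ⟨k, hk⟩ := hL
      have hcs : c ^ s = c * z ^ k := by
        rw [hzdef, ← zpow_mul,
          show s = 1 + (2:ℤ) ^ (f + 1) * k from by rw [← hk]; ring,
          zpow_add, zpow_one]
      rcases Int.even_or_odd k with hke' | hko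
      · exfalso
        obtain ⟨r, hr⟩ := hke'
        have h1 : t * c * t⁻¹ = c := by
          rw [← hs, hcs,
            show z ^ k = 1 from by
              rw [show k = 2 * r from by omega, zpow_mul, hz2, one_zpow],
            mul_one]
        have h2 : c * t = t * c := by
          calc c * t = (t * c * t⁻¹) * t := by rw [h1]
            _ = t * c := by group
        have hct1 : ⁅c, t⁆ = 1 := commutatorElement_eq_one_iff_mul_comm.mpr h2
        rw [hct1, Subgroup.zpowers_one_eq_bot] at hce
        exact hcne hce
      · -- ⁅c,t⁆ = z, so the commutator has order 2, forcing f = 0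
        have hctz : ⁅c, t⁆ = z := by
          rw [commutatorElement_def]
          have e1 : c * t * c⁻¹ * t⁻¹ = c * (t * c * t⁻¹)⁻¹ := by group
          rw [e1, ← hs, hcs, hzdef, ← zpow_mul]
          rw [show c * c ^ ((2:ℤ) ^ (f + 1) * k) = c ^ (1 + (2:ℤ) ^ (f + 1) * k) from by
            rw [zpow_add, zpow_one], ← zpow_neg]
          have hstep : c * c ^ (-(1 + (2:ℤ) ^ (f + 1) * k))
              = c ^ (1 + -(1 + (2:ℤ) ^ (f + 1) * k)) := by
            rw [zpow_add, zpow_one]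
          rw [hstep]
          obtain ⟨r, hr⟩ := hko
          rw [show (1:ℤ) + -(1 + (2:ℤ) ^ (f + 1) * k)
              = (2:ℤ) ^ (f + 2) * (-(r + 1)) + (2:ℤ) ^ (f + 1) from by rw [hr]; ring]
          rw [zpow_add, zpow_mul, hcpow_ord, one_zpow, one_mul]
        have hordz : orderOf z = 2 := by
          apply orderOf_eq_prime
          · have := hz2
            rw [show (2:ℤ) = ((2:ℕ):ℤ) from rfl, zpow_natCast] at this
            exact this
          · exact hzne
        have hcard2 : Nat.card (commutator Q) = 2 := by
          rw [hce, hctz, Nat.card_zpowers, hordz]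
        have hf0 : f = 0 := by
          have h1 : Nat.card Q = 8 := by omega
          have h2 : orderOf c = 4 := by omega
          rw [hordc] at h2
          have h3 : (2:ℕ) ^ (f + 2) = 2 ^ 2 := by rw [h2]; decide
          have h4 := Nat.pow_right_injective (le_refl 2) h3
          omega
        subst hf0
        -- s - 1 = 2k with k odd, so s + 1 = 2(k+1)
        refine ⟨k + 1, ?_⟩
        have h5 : s - 1 = 2 * k := by
          rw [hk]; norm_num
        rw [pow_one]
        omega
    · exact hR'
  obtain ⟨k, hk⟩ := hR
  have hsval : s = -1 + (2:ℤ) ^ (f + 1) * k := by rw [← hk]; ring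
  have hcs : c ^ s = c⁻¹ * z ^ k := by
    rw [hzdef, ← zpow_mul, hsval, zpow_add, zpow_neg, zpow_one]
  -- lifts to G (used by both contradiction branches)
  obtain ⟨T, hT⟩ := hπs t
  obtain ⟨Cg, hCg⟩ := hπs c
  set X := Cg ^ ((2:ℤ) ^ (f + 1)) with hX
  have hXmapz : π X = z := by rw [hX, map_zpow, hCg, hzdef]
  have hCX : Cg * X = X * Cg := by
    rw [hX]; exact ((Commute.refl Cg).zpow_right _).eq
  have htopG : Subgroup.closure {π Cg, π T} = ⊤ := by
    rw [hCg, hT]; exact closure_pair_top hcidx ht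
  have hXnotcent : X ∉ Subgroup.center G := by
    intro hX1
    apply hzne
    rw [← hXmapz]
    exact (QuotientGroup.eq_one_iff _).mpr hX1
  rcases Int.even_or_odd k with hke' | hko
  · -- dihedral or (excluded) quaternion case : t c t⁻¹ = c⁻¹
    have hzk1 : z ^ k = 1 := by
      obtain ⟨r, hr⟩ := hke'
      rw [show k = 2 * r from by omega, zpow_mul, hz2, one_zpow]
    have h1 : t * c * t⁻¹ = c⁻¹ := by rw [← hs, hcs, hzk1, mul_one]
    have e1 : t * c ^ d * t⁻¹ = c ^ d := by
      calc t * c ^ d * t⁻¹ = t * (t * t) * t⁻¹ := by rw [hd]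
        _ = t * t := by group
        _ = c ^ d := hd.symm
    have e2 : t * c ^ d * t⁻¹ = c ^ (-d) := by
      rw [← conj_zpow, h1, inv_zpow, ← zpow_neg]
    have hdd : c ^ (2 * d) = 1 := by
      have h3 : c ^ d = c ^ (-d) := by rw [← e1, e2]
      rw [show (2 * d) = d - (-d) from by ring, zpow_sub, ← h3, mul_inv_cancel]
    have hdvd2 : ((2:ℤ) ^ (f + 2)) ∣ 2 * d := by
      have h4 := orderOf_dvd_iff_zpow_eq_one.mpr hdd
      rw [hordc] at h4
      push_cast at h4
      exact h4
    have hdvd_d : ((2:ℤ) ^ (f + 1)) ∣ d := by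
      obtain ⟨r, hr⟩ := hdvd2
      refine ⟨r, ?_⟩
      have h5 : 2 * d = 2 * ((2:ℤ) ^ (f + 1) * r) := by rw [hr]; ring
      exact mul_left_cancel₀ two_ne_zero h5
    obtain ⟨d', hd'⟩ := hdvd_d
    have htt : t * t = z ^ d' := by rw [← hd, hd', hzdef, ← zpow_mul]
    rcases Int.even_or_odd d' with hde | hdo
    · -- t² = 1 : dihedral, success
      have ht2 : t * t = 1 := by
        obtain ⟨r, hr⟩ := hde
        rw [htt, show d' = 2 * r from by omega, zpow_mul, hz2, one_zpow]
      refine ⟨t, t * c, ?_, ?_, ?_⟩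
      · apply orderOf_eq_prime
        · rw [pow_two]; exact ht2
        · intro h
          rw [h] at ht
          exact ht (Subgroup.one_mem _)
      · apply orderOf_eq_prime
        · rw [pow_two]
          calc t * c * (t * c) = (t * c * t⁻¹) * (t * t) * c := by group
            _ = c⁻¹ * 1 * c := by rw [h1, ht2]
            _ = 1 := by group
        · intro h
          apply ht
          have h6 : t = c⁻¹ := by
            calc t = t * c * c⁻¹ := by group
              _ = 1 * c⁻¹ := by rw [h]
              _ = c⁻¹ := one_mul _
          rw [h6]
          exact Subgroup.inv_mem _ (Subgroup.mem_zpowers c)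
      · have htop2 := closure_pair_top hcidx ht
        rw [eq_top_iff, ← htop2, Subgroup.closure_le]
        intro w hw
        simp only [Set.mem_insert_iff, Set.mem_singleton_iff] at hw
        have h1' : t ∈ Subgroup.closure ({t, t * c} : Set Q) :=
          Subgroup.subset_closure (by simp)
        have h2' : t * c ∈ Subgroup.closure ({t, t * c} : Set Q) :=
          Subgroup.subset_closure (by simp)
        rcases hw with rfl | rfl
        · simp only [SetLike.mem_coe]
          have h3 := Subgroup.mul_mem _ h1' h2'
          rw [← mul_assoc, ht2, one_mul] at h3
          exact h3
        · simp only [SetLike.mem_coe]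
          exact h1'
    · -- t² = z : quaternion, contradiction via capability
      exfalso
      have ht2z : t * t = z := by
        obtain ⟨r, hr⟩ := hdo
        rw [htt, hr, zpow_add, zpow_mul, hz2, one_zpow, one_mul, zpow_one]
      apply hXnotcent
      have hker1 : π (T * T * X⁻¹) = 1 := by
        rw [map_mul, map_mul, map_inv, hXmapz, hT, ht2z]
        group
      have hWcent : T * T * X⁻¹ ∈ Subgroup.center G := (QuotientGroup.eq_one_iff _).mp hker1
      set W := T * T * X⁻¹ with hW
      have hWc := Subgroup.mem_center_iff.mp hWcent
      have e1 : T * T = W * X := by rw [hW]; group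
      have hTX : T * X = X * T := by
        have e2 : T * (W * X) = (W * X) * T := by
          rw [← e1]; group
        have e3 : W * (T * X) = W * (X * T) := by
          calc W * (T * X) = T * (W * X) := by rw [← mul_assoc, ← hWc T, mul_assoc]
            _ = (W * X) * T := e2
            _ = W * (X * T) := by group
        exact mul_left_cancel e3
      exact mem_center_of_commutes htopG hCX hTX
  · -- semidihedral case : contradiction via capability
    exfalso
    apply hXnotcent
    set uu := Cg ^ ((2:ℤ) ^ (f + 2)) with huu
    have huucent : uu ∈ Subgroup.center G := by
      have h1 : π uu = 1 := by rw [huu, map_zpow, hCg]; exact hcpow_ord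
      exact (QuotientGroup.eq_one_iff _).mp h1
    set ζ := T * Cg * T⁻¹ * (Cg ^ s)⁻¹ with hζ
    have hζcent : ζ ∈ Subgroup.center G := by
      have h1 : π ζ = 1 := by
        rw [hζ, map_mul, map_mul, map_mul, map_inv, map_inv, map_zpow, hT, hCg, ← hs]
        group
      exact (QuotientGroup.eq_one_iff _).mp h1
    have hζc := Subgroup.mem_center_iff.mp hζcent
    have huuc := Subgroup.mem_center_iff.mp huucent
    have hTC : T * Cg * T⁻¹ = ζ * Cg ^ s := by rw [hζ]; group
    have hTCi : ∀ i : ℤ, T * Cg ^ i * T⁻¹ = ζ ^ i * Cg ^ (s * i) := by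
      intro i
      have e1 : T * Cg ^ i * T⁻¹ = (T * Cg * T⁻¹) ^ i := (conj_zpow).symm
      rw [e1, hTC, (show Commute ζ (Cg ^ s) from (hζc (Cg ^ s)).symm).mul_zpow, ← zpow_mul]
    -- T² commutes with Cg
    have hTTC : (T * T) * Cg = Cg * (T * T) := by
      have h1 : π (T * T * (Cg ^ d)⁻¹) = 1 := by
        rw [map_mul, map_mul, map_inv, map_zpow, hT, hCg, ← hd]
        group
      have hW2cent : T * T * (Cg ^ d)⁻¹ ∈ Subgroup.center G := (QuotientGroup.eq_one_iff _).mp h1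
      have hW2c := Subgroup.mem_center_iff.mp hW2cent
      set W2 := T * T * (Cg ^ d)⁻¹ with hW2def
      have e1 : T * T = W2 * Cg ^ d := by rw [hW2def]; group
      rw [e1]
      calc W2 * Cg ^ d * Cg = W2 * (Cg * Cg ^ d) := by
            rw [mul_assoc, ← ((Commute.refl Cg).zpow_left d).eq]
        _ = Cg * (W2 * Cg ^ d) := by rw [← mul_assoc, ← hW2c Cg, mul_assoc]
    -- the relation  ζ^(1+s) * Cg^(s*s) = Cg
    have e4 : ζ ^ (1 + s) * Cg ^ (s * s) = Cg := by
      have e1 : (T * T) * Cg * (T * T)⁻¹ = Cg := by rw [hTTC]; group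
      have e2 : (T * T) * Cg * (T * T)⁻¹ = T * (T * Cg * T⁻¹) * T⁻¹ := by group
      have e3 : T * (ζ * Cg ^ s) * T⁻¹ = ζ * (ζ ^ s * Cg ^ (s * s)) := by
        calc T * (ζ * Cg ^ s) * T⁻¹ = ζ * (T * Cg ^ s * T⁻¹) := by
              rw [show T * (ζ * Cg ^ s) = ζ * (T * Cg ^ s) from by
                rw [← mul_assoc, hζc T, mul_assoc]]
              group
          _ = ζ * (ζ ^ s * Cg ^ (s * s)) := by rw [hTCi s]
      have e5 : Cg = ζ * (ζ ^ s * Cg ^ (s * s)) := by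
        rw [← e3, ← hTC, ← e2, e1]
      rw [zpow_add, zpow_one]
      rw [mul_assoc]
      exact e5.symm
    have e5 : ζ ^ (1 + s) = Cg ^ (1 - s * s) := by
      have h := congrArg (fun w => w * (Cg ^ (s * s))⁻¹) e4
      rw [mul_inv_cancel_right] at h
      rw [h, zpow_sub, zpow_one]
    have e6 : ζ ^ ((2:ℤ) ^ (f + 1) * k) = uu ^ (-(k * ((2:ℤ) ^ f * k - 1))) := by
      have h1 : (1:ℤ) + s = (2:ℤ) ^ (f + 1) * k := by rw [← hk]; ring
      have h2 : (1:ℤ) - s * s = (2:ℤ) ^ (f + 2) * (-(k * ((2:ℤ) ^ f * k - 1))) := by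
        rw [hsval]; ring
      rw [h1] at e5
      rw [h2] at e5
      rw [e5, zpow_mul, ← huu]
    set Y := ζ ^ ((2:ℤ) ^ (f + 1)) * uu ^ ((2:ℤ) ^ f * k - 1) with hYdef
    have hcomm_zu : Commute ζ uu := (show Commute ζ uu from (hζc uu).symm)
    have hYk : Y ^ k = 1 := by
      rw [hYdef, (hcomm_zu.zpow_zpow _ _).mul_zpow, ← zpow_mul, ← zpow_mul, e6, ← zpow_add]
      rw [show -(k * ((2:ℤ) ^ f * k - 1)) + ((2:ℤ) ^ f * k - 1) * k = 0 from by ring, zpow_zero]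
    have hY1 : Y = 1 := by
      obtain ⟨j, hj⟩ := (IsPGroup.iff_orderOf.mp hG) Y
      rcases Nat.eq_zero_or_pos j with rfl | hj1
      · rw [pow_zero] at hj
        exact orderOf_eq_one_iff.mp hj
      · exfalso
        have hdvdk : ((orderOf Y : ℕ) : ℤ) ∣ k := orderOf_dvd_iff_zpow_eq_one.mpr hYk
        have h2' : (2:ℤ) ∣ k := by
          refine dvd_trans ?_ hdvdk
          rw [hj]
          push_cast
          exact dvd_pow_self 2 (by omega)
        obtain ⟨r, hr⟩ := h2'
        exact (Int.not_even_iff_odd.mpr hko) ⟨r, by omega⟩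
    have hζval : ζ ^ ((2:ℤ) ^ (f + 1)) = uu ^ (1 - (2:ℤ) ^ f * k) := by
      have h1 := hY1
      rw [hYdef] at h1
      have h2' := congrArg (fun w => w * (uu ^ ((2:ℤ) ^ f * k - 1))⁻¹) h1
      rw [mul_inv_cancel_right] at h2'
      rw [h2', one_mul, ← zpow_neg]
      congr 1
      ring
    have hTXT : T * X * T⁻¹ = X := by
      rw [hX, hTCi]
      rw [show s * (2:ℤ) ^ (f + 1)
          = (2:ℤ) ^ (f + 2) * ((2:ℤ) ^ f * k) + -(2:ℤ) ^ (f + 1) from by rw [hsval]; ring]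
      rw [zpow_add, zpow_mul, ← huu, hζval, ← mul_assoc, ← zpow_add]
      rw [show (1 - (2:ℤ) ^ f * k) + (2:ℤ) ^ f * k = 1 from by ring, zpow_one, huu, ← zpow_add]
      congr 1
      ring
    have hTX : T * X = X * T := by
      have h1 := congrArg (fun w => w * T) hTXT
      rw [inv_mul_cancel_right] at h1
      exact h1
    exact mem_center_of_commutes htopG hCX hTX

lemma forward_aux {Q : Type u} [Group Q] [Finite Q] (h2Q : IsPGroup 2 Q)
    (hQnc : IsCyclic Q → ∀ q : Q, q = 1)
    (x y : Q) (hx : orderOf x = 2) (hy : orderOf y = 2)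
    (hxy : Subgroup.closure {x, y} = ⊤) : (commutator Q).index = 4 := by
  classical
  haveI : Fact (Nat.Prime 2) := ⟨Nat.prime_two⟩
  set A := Q ⧸ commutator Q with hAdef
  have hidxA : (commutator Q).index = Nat.card A := rfl
  set ρ := QuotientGroup.mk' (commutator Q) with hρdef
  have hρs : Function.Surjective ρ := QuotientGroup.mk'_surjective _
  have hAab : ∀ a b : A, a * b = b * a := by
    intro a b
    obtain ⟨a', rfl⟩ := hρs a
    obtain ⟨b', rfl⟩ := hρs b
    have h1 : ⁅ρ a', ρ b'⁆ = 1 := by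
      rw [← map_commutatorElement]
      refine (QuotientGroup.eq_one_iff _).mpr ?_
      rw [_root_.commutator_def]
      exact Subgroup.commutator_mem_commutator (mem_top _) (mem_top _)
    exact commutatorElement_eq_one_iff_mul_comm.mp h1
  have hx2 : (ρ x) ^ 2 = 1 := by rw [← map_pow, ← hx, pow_orderOf_eq_one, map_one]
  have hy2 : (ρ y) ^ 2 = 1 := by rw [← map_pow, ← hy, pow_orderOf_eq_one, map_one]
  have hgen : Subgroup.closure {ρ x, ρ y} = ⊤ := by
    rw [← Set.image_pair, ← MonoidHom.map_closure, hxy,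
      Subgroup.map_top_of_surjective _ hρs]
  set S : Set A := {1, ρ x, ρ y, ρ x * ρ y} with hSdef
  have hself : ∀ a ∈ S, a * a = 1 := by
    intro a ha
    rcases ha with rfl | rfl | rfl | rfl
    · exact one_mul 1
    · rw [← pow_two]; exact hx2
    · rw [← pow_two]; exact hy2
    · have h1 : ρ x * ρ y * (ρ x * ρ y) = (ρ x * ρ x) * (ρ y * ρ y) := by
        rw [show ρ x * ρ y * (ρ x * ρ y) = ρ x * (ρ y * ρ x) * ρ y from by group,
          hAab (ρ y) (ρ x)]
        group
      rw [h1, ← pow_two, ← pow_two, hx2, hy2, one_mul]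
  have hmul : ∀ a ∈ S, ∀ b ∈ S, a * b ∈ S := by
    have hxx : ρ x * ρ x = 1 := by rw [← pow_two]; exact hx2
    have hyy : ρ y * ρ y = 1 := by rw [← pow_two]; exact hy2
    intro a ha b hb
    rcases ha with rfl | rfl | rfl | rfl <;> rcases hb with rfl | rfl | rfl | rfl
    · exact Or.inl (one_mul 1)
    · rw [one_mul]; exact Or.inr (Or.inl rfl)
    · rw [one_mul]; exact Or.inr (Or.inr (Or.inl rfl))
    · rw [one_mul]; exact Or.inr (Or.inr (Or.inr rfl))
    · rw [mul_one]; exact Or.inr (Or.inl rfl)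
    · rw [hxx]; exact Or.inl rfl
    · exact Or.inr (Or.inr (Or.inr rfl))
    · rw [← mul_assoc, hxx, one_mul]; exact Or.inr (Or.inr (Or.inl rfl))
    · rw [mul_one]; exact Or.inr (Or.inr (Or.inl rfl))
    · rw [hAab (ρ y) (ρ x)]; exact Or.inr (Or.inr (Or.inr rfl))
    · rw [hyy]; exact Or.inl rfl
    · rw [show ρ y * (ρ x * ρ y) = ρ x * (ρ y * ρ y) from by
          rw [← mul_assoc, hAab (ρ y) (ρ x), mul_assoc], hyy, mul_one]
      exact Or.inr (Or.inl rfl)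
    · rw [mul_one]; exact Or.inr (Or.inr (Or.inr rfl))
    · rw [show ρ x * ρ y * ρ x = ρ x * ρ x * ρ y from by
          rw [mul_assoc, hAab (ρ y) (ρ x), ← mul_assoc], hxx, one_mul]
      exact Or.inr (Or.inr (Or.inl rfl))
    · rw [mul_assoc, hyy, mul_one]; exact Or.inr (Or.inl rfl)
    · rw [hself _ (Or.inr (Or.inr (Or.inr rfl)))]; exact Or.inl rfl
  have hinv : ∀ a ∈ S, a⁻¹ ∈ S := by
    intro a ha
    have h1 : a⁻¹ = a := inv_eq_of_mul_eq_one_right (hself a ha)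
    rw [h1]; exact ha
  have hsub : ∀ a : A, a ∈ S := by
    intro a
    have h1 : a ∈ Subgroup.closure {ρ x, ρ y} := by rw [hgen]; trivial
    refine Subgroup.closure_induction ?_ ?_ ?_ ?_ h1
    · rintro w hw
      rcases hw with rfl | rfl
      · exact Or.inr (Or.inl rfl)
      · exact Or.inr (Or.inr (Or.inl rfl))
    · exact Or.inl rfl
    · intro u v _ _ hu hv; exact hmul u hu v hv
    · intro u _ hu; exact hinv u hu
  have hcard4 : Nat.card A ≤ 4 := by
    have h1 : (Set.univ : Set A) ⊆ S := fun a _ => hsub a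
    have h2 : Nat.card A = (Set.univ : Set A).ncard := (Set.ncard_univ A).symm
    have h3 : (Set.univ : Set A).ncard ≤ S.ncard :=
      Set.ncard_le_ncard h1 (Set.toFinite S)
    have h4 : S.ncard ≤ 4 := by
      rw [hSdef]
      apply le_trans (Set.ncard_insert_le _ _)
      have h5 := Set.ncard_insert_le (ρ x) ({ρ y, ρ x * ρ y} : Set A)
      have h6 := Set.ncard_insert_le (ρ y) ({ρ x * ρ y} : Set A)
      have h7 := Set.ncard_singleton (ρ x * ρ y)
      omega
    omega
  obtain ⟨kA, hkA⟩ := IsPGroup.iff_card.mp (h2Q.to_quotient (commutator Q))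
  have hkA : Nat.card A = 2 ^ kA := hkA
  have hposA : 0 < Nat.card A := Nat.card_pos
  have hposQ : 0 < Nat.card Q := Nat.card_pos
  have hnot12 : ¬ Nat.card A ≤ 2 := by
    intro hle
    have hcyc : IsCyclic A := by
      rcases (by omega : Nat.card A = 1 ∨ Nat.card A = 2) with h | h
      · haveI : Subsingleton A := (Nat.card_eq_one_iff_unique.mp h).1
        infer_instance
      · exact isCyclic_of_prime_card h
    have hbot : commutator Q = ⊥ := commutator_eq_bot_of_cyclic_quot h2Q hcyc
    have hQcard : Nat.card Q ≤ 2 := by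
      have h1 : (commutator Q).index = Nat.card Q := by
        rw [hbot]; exact Subgroup.index_bot
      omega
    have hcycQ : IsCyclic Q := by
      rcases (by omega : Nat.card Q = 1 ∨ Nat.card Q = 2) with h | h
      · haveI : Subsingleton Q := (Nat.card_eq_one_iff_unique.mp h).1
        infer_instance
      · exact isCyclic_of_prime_card h
    have h1 := hQnc hcycQ x
    rw [h1, orderOf_one] at hx
    omega
  have hfin : Nat.card A = 4 := by
    have hkA2 : kA ≤ 2 := by
      by_contra h
      have h1 : (2:ℕ) ^ 3 ≤ 2 ^ kA := Nat.pow_le_pow_right (by norm_num) (by omega)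
      omega
    rcases (by omega : kA = 0 ∨ kA = 1 ∨ kA = 2) with rfl | rfl | rfl
    · rw [pow_zero] at hkA; omega
    · rw [pow_one] at hkA; omega
    · rw [hkA]; decide
  rw [hidxA, hfin]

lemma klein_aux {Q : Type u} [Group Q] [Finite Q] (h2Q : IsPGroup 2 Q)
    (hQnc : IsCyclic Q → ∀ q : Q, q = 1)
    (hab : ∀ a b : Q, a * b = b * a) (hidx : (commutator Q).index = 4) :
    ∃ x y : Q, orderOf x = 2 ∧ orderOf y = 2 ∧ Subgroup.closure {x, y} = ⊤ := by
  classical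
  haveI : Fact (Nat.Prime 2) := ⟨Nat.prime_two⟩
  have hbot : commutator Q = ⊥ := by
    rw [_root_.commutator_def, eq_bot_iff, Subgroup.commutator_le]
    intro g _ h _
    rw [Subgroup.mem_bot]
    exact commutatorElement_eq_one_iff_mul_comm.mpr (hab g h)
  have hcard4 : Nat.card Q = 4 := by
    rw [hbot, Subgroup.index_bot] at hidx
    exact hidx
  have hnocyc : ¬ IsCyclic Q := by
    intro hcyc
    have h1 := hQnc hcyc
    have h2 : Nat.card Q = 1 := by
      haveI : Subsingleton Q := ⟨fun a b => by rw [h1 a, h1 b]⟩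
      exact Nat.card_eq_one_iff_unique.mpr ⟨inferInstance, ⟨1⟩⟩
    omega
  have horder : ∀ g : Q, g ≠ 1 → orderOf g = 2 := by
    intro g hg
    obtain ⟨kg, hkg⟩ := (IsPGroup.iff_orderOf.mp h2Q) g
    have hdvd : orderOf g ∣ 4 := hcard4 ▸ orderOf_dvd_natCard g
    have hkg1 : kg ≠ 0 := by
      intro h
      rw [h, pow_zero, orderOf_eq_one_iff] at hkg
      exact hg hkg
    have hkg2 : kg ≤ 2 := by
      by_contra h
      have h1 : (2:ℕ) ^ 3 ≤ 2 ^ kg := Nat.pow_le_pow_right (by norm_num) (by omega)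
      have h2 := Nat.le_of_dvd (by norm_num) hdvd
      omega
    rcases (by omega : kg = 1 ∨ kg = 2) with rfl | rfl
    · rw [hkg]; norm_num
    · exfalso
      exact hnocyc (isCyclic_of_orderOf_eq_card g (by rw [hkg, hcard4]; decide))
  haveI : Nontrivial Q := by
    have h1 : 1 < Nat.card Q := by omega
    exact Finite.one_lt_card_iff_nontrivial.mp h1
  obtain ⟨x, hx1⟩ := exists_ne (1 : Q)
  have hxord := horder x hx1
  have hzx : Nat.card (Subgroup.zpowers x) = 2 := by rw [Nat.card_zpowers, hxord]
  obtain ⟨y, hy⟩ : ∃ y, y ∉ Subgroup.zpowers x := by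
    by_contra hall
    push_neg at hall
    have h1 : Subgroup.zpowers x = ⊤ := (Subgroup.eq_top_iff' _).mpr hall
    rw [h1] at hzx
    have h2 : Nat.card (⊤ : Subgroup Q) = Nat.card Q := Subgroup.card_top
    omega
  have hy1 : y ≠ 1 := fun h => hy (h ▸ Subgroup.one_mem _)
  have hyord := horder y hy1
  have hxy_ne : x ≠ y := fun h => hy (h ▸ Subgroup.mem_zpowers x)
  refine ⟨x, y, hxord, hyord, ?_⟩
  set H := Subgroup.closure ({x, y} : Set Q) with hHdef
  have hxH : x ∈ H := Subgroup.subset_closure (by simp)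
  have hyH : y ∈ H := Subgroup.subset_closure (by simp)
  have h3 : 3 ≤ Nat.card H := by
    have hinj : Function.Injective
        (fun i : Fin 3 => if i = 0 then (⟨1, H.one_mem⟩ : H)
          else if i = 1 then ⟨x, hxH⟩ else ⟨y, hyH⟩) := by
      intro i j hij
      fin_cases i <;> fin_cases j <;>
        simp_all [Subtype.ext_iff] <;>
        first
          | rfl
          | (exfalso; first
              | exact hx1 hij.symm | exact hx1 hij
              | exact hy1 hij.symm | exact hy1 hij
              | exact hxy_ne hij | exact hxy_ne hij.symm)
    have h4 : Nat.card (Fin 3) ≤ Nat.card H := Nat.card_le_card_of_injective _ hinj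
    simpa using h4
  have hdvd : Nat.card H ∣ 4 := hcard4 ▸ Subgroup.card_subgroup_dvd_card H
  have h4 : Nat.card H = 4 := by
    have h5 := Nat.le_of_dvd (by norm_num) hdvd
    rcases (by omega : Nat.card H = 3 ∨ Nat.card H = 4) with h | h
    · exfalso
      rw [h] at hdvd
      norm_num at hdvd
    · exact h
  exact Subgroup.eq_top_of_card_eq H (by rw [h4, hcard4])

theorem central_quotient_dihedral_iff_index_four
    (G : Type*) [Group G] [Finite G] (hG : IsPGroup 2 G) :
    (∃ x y : G ⧸ Subgroup.center G,
        orderOf x = 2 ∧ orderOf y = 2 ∧ Subgroup.closure {x, y} = ⊤) ↔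
      (commutator G ⊔ Subgroup.center G).index = 4 := by
  classical
  haveI : Fact (Nat.Prime 2) := ⟨Nat.prime_two⟩
  set π := QuotientGroup.mk' (Subgroup.center G) with hπdef
  have hπs : Function.Surjective π := QuotientGroup.mk'_surjective _
  have h2Q : IsPGroup 2 (G ⧸ Subgroup.center G) := hG.to_quotient _
  have hmap : commutator (G ⧸ Subgroup.center G) = Subgroup.map π (commutator G) := by
    rw [_root_.commutator_def (G ⧸ Subgroup.center G), _root_.commutator_def G,
      Subgroup.map_commutator, Subgroup.map_top_of_surjective π hπs]
  have htransfer : (commutator (G ⧸ Subgroup.center G)).index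
      = (commutator G ⊔ Subgroup.center G).index := by
    rw [hmap, ← Subgroup.index_comap_of_surjective _ hπs, Subgroup.comap_map_eq,
      QuotientGroup.ker_mk']
  constructor
  · rintro ⟨x, y, hx, hy, hxy⟩
    rw [← htransfer]
    exact forward_aux h2Q subsingleton_center_quot x y hx hy hxy
  · intro hidx
    rw [← htransfer] at hidx
    by_cases hab : ∀ a b : G ⧸ Subgroup.center G, a * b = b * a
    · exact klein_aux h2Q subsingleton_center_quot hab hidx
    · exact dihedral_gens_of_index_four hG hab hidx

end Main
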